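/- Let N ≥ 2 and let p_l = 1/N and p_h satisfy 1/N < p_h < 1. Then N·p_h(1−p_h)^{N−1} < N·p_l(1−p_l)^{N−1}; that is, the total throughput at the Nash equilibrium profile (p_h, …, p_h) is strictly lower than the total throughput at the symmetric social optimum (p_l, …, p_l). -/

import Mathlib

/-- For `N ≥ 2`, `pl = 1/N` and `1/N < ph < 1`, the total throughput at the Nash
equilibrium `(ph, …, ph)` is strictly lower than at the symmetric social optimum
`(pl, …, pl)`: `N·ph(1−ph)^{N−1} < N·pl(1−pl)^{N−1}`. -/
theorem nash_throughput_lt_optimum (N : ℕ) (hN : 2 ≤ N) (pl ph : ℝ)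
    (hpl : pl = 1 / N) (hlh : pl < ph) (hph : ph < 1) :
    (N : ℝ) * (ph * (1 - ph) ^ (N - 1)) < (N : ℝ) * (pl * (1 - pl) ^ (N - 1)) := by
  obtain ⟨m, rfl⟩ : ∃ m, N = m + 2 := ⟨N - 2, by omega⟩
  set n : ℕ := m + 2 with hn
  have hN0 : (0:ℝ) < n := by positivity
  have hpl1 : pl < 1 := by
    rw [hpl]
    rw [div_lt_one hN0]
    exact_mod_cast by omega
  set f : ℝ → ℝ := fun p => p * (1 - p) ^ (m + 1) with hf
  have hderiv : ∀ p : ℝ, HasDerivAt f ((1 - p) ^ m * (1 - (n:ℝ) * p)) p := by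
    intro p
    have h1 : HasDerivAt (fun p : ℝ => 1 - p) (-1) p :=
      (hasDerivAt_id p).const_sub 1
    have h2 : HasDerivAt (fun p : ℝ => (1 - p) ^ (m + 1))
        ((↑(m + 1) : ℝ) * (1 - p) ^ m * (-1)) p := by
      simpa using h1.fun_pow (m + 1)
    have h3 := (hasDerivAt_id p).fun_mul h2
    refine HasDerivAt.congr_deriv h3 ?_
    simp only [id_eq]
    push_cast [hn]
    ring
  have hanti : StrictAntiOn f (Set.Icc pl 1) := by
    apply strictAntiOn_of_deriv_neg (convex_Icc _ _)
    · exact Continuous.continuousOn (by continuity)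
    · intro x hx
      rw [interior_Icc] at hx
      rw [(hderiv x).deriv]
      have hx1 : x < 1 := hx.2
      have hx2 : (1:ℝ)/n < x := hpl ▸ hx.1
      have hpow : (0:ℝ) < (1 - x) ^ m := pow_pos (by linarith) m
      have : (1:ℝ) - n * x < 0 := by
        have := (div_lt_iff₀ hN0).mp hx2
        linarith
      exact mul_neg_of_pos_of_neg hpow this
  have key : f ph < f pl :=
    hanti ⟨le_refl _, le_of_lt hpl1⟩ ⟨le_of_lt hlh, le_of_lt hph⟩ hlh
  have hfin : ph * (1 - ph) ^ (n - 1) < pl * (1 - pl) ^ (n - 1) := by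
    simpa [hf, show n - 1 = m + 1 from rfl] using key
  exact mul_lt_mul_of_pos_left hfin hN0
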